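/- arXiv:1912.05253 — 2 statements merged into one kernel-verified Lean document; each statement's English description precedes it below -/
import Mathlib

section
/- Let 0 < i < n and suppose i0 occurs in W_n^(k) at positions t, t+1 (i.e., W_n^(k)[t] = i and W_n^(k)[t+1] = 0). Then the factor of W_n^(k) of length |W_i^(k)| ending at position t equals W_i^(k); that is, every occurrence of the digit i followed by 0 in W_n^(k) arises as the last digit of an occurrence of the factor W_i^(k). -/
def kbon (k : ℕ) (n : ℕ) : ℕ :=
  if _h1 : n < k - 1 then 0
  else if _h2 : n = k - 1 then 1
  else ∑ i ∈ Finset.range k, kbon k (n - i - 1)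
termination_by n
decreasing_by omega

/-- The k-bonacci morphism on words over ℕ. -/
def phiW (k : ℕ) (w : List ℕ) : List ℕ :=
  w.flatMap (fun a => if a % k = k - 1 then [a + 1] else [k * (a / k), a + 1])

/-- The finite k-bonacci word over the infinite alphabet ℕ. -/
def W (k n : ℕ) : List ℕ := (phiW k)^[n] [0]

/-- The letter map of the k-bonacci morphism. -/
def F (k : ℕ) : ℕ → List ℕ :=
  fun a => if a % k = k - 1 then [a + 1] else [k * (a / k), a + 1]

lemma phiW_eq (k : ℕ) (w : List ℕ) : phiW k w = w.flatMap (F k) := rfl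

lemma W_succ (k n : ℕ) : W k (n + 1) = (W k n).flatMap (F k) := by
  rw [W, Function.iterate_succ_apply', ← W, phiW_eq]

lemma split_flatMap {α β : Type} (f : α → List β) :
    ∀ (w : List α) (u r : List β) (i : β), w.flatMap f = u ++ i :: r →
    ∃ w1 a w2 p q, w = w1 ++ a :: w2 ∧ f a = p ++ i :: q ∧
      u = w1.flatMap f ++ p ∧ r = q ++ w2.flatMap f := by
  intro w
  induction w with
  | nil => intro u r i h; simp at h
  | cons a w ih =>
    intro u r i h
    rw [List.flatMap_cons] at h
    rcases List.append_eq_append_iff.mp h with ⟨u', hu, hfl⟩ | ⟨c', hfa, hc⟩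
    · -- u = f a ++ u', w.flatMap f = u' ++ i :: r
      obtain ⟨w1, a', w2, p, q, hw, hfa, hu', hr⟩ := ih u' r i hfl
      exact ⟨a :: w1, a', w2, p, q, by simp [hw], hfa,
        by rw [hu, hu', List.flatMap_cons, List.append_assoc], hr⟩
    · -- f a = u ++ c', c' ++ w.flatMap f = i :: r
      cases c' with
      | nil =>
        simp only [List.append_nil] at hfa
        simp only [List.nil_append] at hc
        obtain ⟨w1, a', w2, p, q, hw, hfa', hu', hr⟩ := ih [] r i hc.symm
        obtain ⟨h1', h2'⟩ := List.append_eq_nil_iff.mp hu'.symm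
        subst h2'
        exact ⟨a :: w1, a', w2, [], q, by simp [hw], hfa', by simp [hfa, h1'], hr⟩
      | cons x c'' =>
        simp only [List.cons_append] at hc
        injection hc with h1 h2
        subst h1
        exact ⟨[], a, w, u, c'', rfl, by rw [hfa], by simp, h2⟩

lemma suffix_flatMap {α β : Type} (f : α → List β) {l₁ l₂ : List α} (h : l₁ <:+ l₂) :
    l₁.flatMap f <:+ l₂.flatMap f := by
  obtain ⟨z, rfl⟩ := h
  rw [List.flatMap_append]
  exact List.suffix_append _ _

/-- If `w2.flatMap (F k) = b :: v` with `b + 2 ≤ k`, then `w2 = c :: w2'` with `c + 2 ≤ k`. -/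
lemma head_small (k : ℕ) (hk : 2 < k) (w2 : List ℕ) (b : ℕ) (v : List ℕ)
    (hb : b + 2 ≤ k) (h : w2.flatMap (F k) = b :: v) :
    ∃ c w2', w2 = c :: w2' ∧ c + 2 ≤ k := by
  cases w2 with
  | nil => simp at h
  | cons c w2' =>
    refine ⟨c, w2', rfl, ?_⟩
    rw [List.flatMap_cons] at h
    by_cases hc : c % k = k - 1
    · have hfc : F k c = [c + 1] := by simp [F, hc]
      rw [hfc] at h
      have hbc : c + 1 = b := by simpa using congrArg (·.head?) h
      have hle : k - 1 ≤ c := le_trans (le_of_eq hc.symm) (Nat.mod_le c k)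
      omega
    · have hfc : F k c = [k * (c / k), c + 1] := by simp [F, hc]
      rw [hfc] at h
      have hbc : k * (c / k) = b := by simpa using congrArg (·.head?) h
      have hck : c / k = 0 := by
        by_contra hne
        have : k ≤ k * (c / k) := Nat.le_mul_of_pos_right k (Nat.pos_of_ne_zero hne)
        omega
      have hck' : c < k := (Nat.div_eq_zero_iff.mp hck).resolve_left (by omega)
      have hmod : c % k = c := Nat.mod_eq_of_lt hck'
      omega

lemma key (k : ℕ) (hk : 2 < k) :
    ∀ n i b u v, 1 ≤ i → b + 2 ≤ k → W k n = u ++ i :: b :: v →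
      W k i <:+ u ++ [i] := by
  intro n
  induction n with
  | zero =>
    intro i b u v _ _ h
    rw [show W k 0 = [0] from rfl] at h
    cases u with
    | nil =>
      injection h with h1 h2
      simp at h2
    | cons x u' =>
      rw [List.cons_append] at h
      injection h with h1 h2
      simp at h2
  | succ n ih =>
    intro i b u v hi hb h
    rw [W_succ] at h
    obtain ⟨w1, a, w2, p, q, hw, hfa, hu, hr⟩ :=
      split_flatMap (F k) (W k n) u (b :: v) i h
    by_cases ha : a % k = k - 1
    · -- F k a = [a+1], so p = [], i = a + 1, q = []
      have hfa' : F k a = [a + 1] := by simp [F, ha]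
      rw [hfa'] at hfa
      obtain ⟨rfl, rfl, rfl⟩ : p = [] ∧ a + 1 = i ∧ q = [] := by
        cases p with
        | nil =>
          injection hfa with h1 h2
          exact ⟨rfl, h1, h2.symm⟩
        | cons x p' =>
          injection hfa with h1 h2
          simp at h2
      simp only [List.nil_append] at hr
      obtain ⟨c, w2', rfl, hc⟩ := head_small k hk w2 b v hb hr.symm
      have ha1 : 1 ≤ a := by
        have : k - 1 ≤ a := le_trans (le_of_eq ha.symm) (Nat.mod_le a k)
        omega
      have hWa : W k a <:+ w1 ++ [a] := ih a c w1 w2' ha1 hc (by simp [hw])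
      have hsuf : W k (a + 1) <:+ (w1 ++ [a]).flatMap (F k) := by
        rw [W_succ]; exact suffix_flatMap _ hWa
      rw [List.flatMap_append] at hsuf
      simpa [hu, hfa'] using hsuf
    · have hfa' : F k a = [k * (a / k), a + 1] := by simp [F, ha]
      rw [hfa'] at hfa
      cases p with
      | nil =>
        -- i = k * (a/k), q = [a+1]
        simp only [List.nil_append] at hfa
        injection hfa with h1 h2
        exfalso
        have hb' : b = a + 1 := by
          have := congrArg (·.head?) hr
          simp [← h2] at this
          exact this
        have hdiv : a / k = 0 := Nat.div_eq_of_lt (by omega)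
        rw [← h1, hdiv, Nat.mul_zero] at hi
        exact absurd hi (by omega)
      | cons x p' =>
        injection hfa with h1 h2
        obtain ⟨rfl, rfl, rfl⟩ : p' = [] ∧ a + 1 = i ∧ q = [] := by
          cases p' with
          | nil =>
            injection h2 with h3 h4
            exact ⟨rfl, h3, h4.symm⟩
          | cons y p'' =>
            injection h2 with h3 h4
            simp at h4
        subst h1
        simp only [List.nil_append] at hr
        obtain ⟨c, w2', rfl, hc⟩ := head_small k hk w2 b v hb hr.symm
        by_cases ha0 : a = 0
        · -- i = 1, W k 1 = [0, 1]
          subst ha0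
          have hW1 : W k 1 = [0, 1] := by
            rw [W_succ]
            simp only [W, Function.iterate_zero, id_eq, List.flatMap_cons,
              List.flatMap_nil, F]
            rw [if_neg (by rw [Nat.zero_mod]; omega : ¬ (0:ℕ) % k = k - 1)]
            simp
          rw [hW1, hu]
          refine ⟨w1.flatMap (F k), ?_⟩
          simp
        · have hWa : W k a <:+ w1 ++ [a] :=
            ih a c w1 w2' (by omega) hc (by simp [hw])
          have hsuf : W k (a + 1) <:+ (w1 ++ [a]).flatMap (F k) := by
            rw [W_succ]; exact suffix_flatMap _ hWa
          rw [List.flatMap_append] at hsuf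
          simpa [hu, hfa'] using hsuf

theorem i0_occurrence_ends_Wi (k i n t : ℕ) (hk : 2 < k) (hi0 : 0 < i) (hin : i < n)
    (h1 : (W k n)[t]? = some i) (h2 : (W k n)[t + 1]? = some 0) :
    (W k i).length ≤ t + 1 ∧
    ((W k n).drop (t + 1 - (W k i).length)).take (W k i).length = W k i := by
  have ht1 : t + 1 < (W k n).length := (List.getElem?_eq_some_iff.mp h2).1
  have ht : t < (W k n).length := by omega
  have e1 : (W k n)[t] = i := by
    have := List.getElem?_eq_getElem ht
    rw [h1] at this; exact (Option.some_injective _ this.symm)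
  have e2 : (W k n)[t+1] = 0 := by
    have := List.getElem?_eq_getElem ht1
    rw [h2] at this; exact (Option.some_injective _ this.symm)
  have hdec : W k n = (W k n).take t ++ i :: 0 :: (W k n).drop (t + 2) := by
    conv_lhs => rw [← List.take_append_drop t (W k n)]
    congr 1
    rw [List.drop_eq_getElem_cons ht, e1]
    congr 1
    rw [List.drop_eq_getElem_cons ht1, e2]
  have hsuf : W k i <:+ (W k n).take t ++ [i] :=
    key k hk n i 0 ((W k n).take t) ((W k n).drop (t + 2)) hi0 (by omega) hdec
  obtain ⟨z, hz⟩ := hsuf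
  have hlt : ((W k n).take t).length = t := by
    rw [List.length_take]; omega
  have hlen' : z.length + (W k i).length = t + 1 := by
    have := congrArg List.length hz
    simp [hlt] at this
    omega
  have hlen : (W k i).length ≤ t + 1 := by omega
  refine ⟨hlen, ?_⟩
  have hzl : z.length = t + 1 - (W k i).length := by omega
  have hfull : W k n = z ++ (W k i ++ (0 :: (W k n).drop (t + 2))) :=
    calc W k n = (W k n).take t ++ i :: 0 :: (W k n).drop (t + 2) := hdec
      _ = ((W k n).take t ++ [i]) ++ (0 :: (W k n).drop (t + 2)) := by simp
      _ = (z ++ W k i) ++ (0 :: (W k n).drop (t + 2)) := by rw [hz]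
      _ = z ++ (W k i ++ (0 :: (W k n).drop (t + 2))) := by rw [List.append_assoc]
  rw [hfull, ← hzl, List.drop_left, List.take_left]
end

section
/- Let k ≥ 3 and n > 2k-1. Then |W_{n-k}^(k)| ≥ 3|W_{n-2k+1}^(k)|. -/
def cres (k r : ℕ) (w : List ℕ) : ℕ := w.countP (fun a => a % k == r)

lemma phiW_cons (k a : ℕ) (w : List ℕ) :
    phiW k (a :: w) = (if a % k = k - 1 then [a+1] else [k*(a/k), a+1]) ++ phiW k w := by
  simp [phiW]

lemma cres_le (k r : ℕ) (w : List ℕ) : cres k r w ≤ w.length := List.countP_le_length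

lemma cres_pair_le (k r s : ℕ) (hrs : r ≠ s) (w : List ℕ) :
    cres k r w + cres k s w ≤ w.length := by
  induction w with
  | nil => simp [cres]
  | cons a w ih =>
      simp only [cres, List.countP_cons] at *
      by_cases h1 : a % k = r <;> by_cases h2 : a % k = s <;> simp_all <;> omega

lemma mod_succ_of_eq (k a : ℕ) (hk : 2 ≤ k) (h : a % k = k - 1) : (a + 1) % k = 0 := by
  rw [Nat.add_mod, h, Nat.mod_eq_of_lt (by omega : (1:ℕ) < k)]
  have : k - 1 + 1 = k := by omega
  rw [this, Nat.mod_self]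

lemma mod_succ_of_ne (k a : ℕ) (hk : 2 ≤ k) (h : a % k ≠ k - 1) : (a + 1) % k = a % k + 1 := by
  have hlt : a % k < k := Nat.mod_lt _ (by omega)
  rw [Nat.add_mod, Nat.mod_eq_of_lt (by omega : (1:ℕ) < k), Nat.mod_eq_of_lt (by omega)]

lemma len_phi (k : ℕ) (w : List ℕ) :
    (phiW k w).length + cres k (k-1) w = 2 * w.length := by
  induction w with
  | nil => simp [phiW, cres]
  | cons a w ih =>
      rw [phiW_cons]
      simp only [cres, List.countP_cons] at *
      by_cases h : a % k = k - 1 <;> simp_all <;> omega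

lemma cres_top (k : ℕ) (hk : 3 ≤ k) (w : List ℕ) :
    cres k (k-1) (phiW k w) = cres k (k-2) w := by
  induction w with
  | nil => simp [phiW, cres]
  | cons a w ih =>
      rw [phiW_cons]
      simp only [cres, List.countP_append, List.countP_cons] at *
      by_cases h : a % k = k - 1
      · have h1 := mod_succ_of_eq k a (by omega) h
        have e1 : ¬ ((0:ℕ) = k - 1) := by omega
        have e2 : ¬ (k - 1 = k - 2) := by omega
        simp [h, h1, e1, e2, List.countP_cons, ih]
      · have h1 := mod_succ_of_ne k a (by omega) h
        have h2 : (k * (a / k)) % k = 0 := Nat.mul_mod_right _ _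
        simp [h, h1, h2, List.countP_cons, ih]
        have e1 : ¬ ((0:ℕ) = k - 1) := by omega
        by_cases h3 : a % k = k - 2
        · have e2 : k - 2 + 1 = k - 1 := by omega
          simp [h3, e1, e2]
          omega
        · have e2 : ¬ (a % k + 1 = k - 1) := by
            have : a % k < k := Nat.mod_lt _ (by omega)
            omega
          simp [h3, e1, e2]

lemma cres_zero (k : ℕ) (hk : 2 ≤ k) (w : List ℕ) :
    cres k 0 (phiW k w) = w.length := by
  induction w with
  | nil => simp [phiW, cres]
  | cons a w ih =>
      rw [phiW_cons]
      simp only [cres, List.countP_append, List.countP_cons] at *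
      by_cases h : a % k = k - 1
      · have h1 := mod_succ_of_eq k a hk h
        simp [h, h1, List.countP_cons, ih]
        omega
      · have h1 := mod_succ_of_ne k a hk h
        have h2 : (k * (a / k)) % k = 0 := Nat.mul_mod_right _ _
        simp [h, h1, h2, List.countP_cons, ih]
        omega

lemma partition3 (w : List ℕ) :
    cres 3 0 w + cres 3 1 w + cres 3 2 w = w.length := by
  induction w with
  | nil => simp [cres]
  | cons a w ih =>
      simp only [cres, List.countP_cons] at *
      have h : a % 3 = 0 ∨ a % 3 = 1 ∨ a % 3 = 2 := by omega
      rcases h with h | h | h <;> simp [h] <;> omega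

lemma W_succ_s15 (k m : ℕ) : W k (m+1) = phiW k (W k m) :=
  Function.iterate_succ_apply' _ _ _

lemma L_mono_succ (k m : ℕ) : (W k m).length ≤ (W k (m+1)).length := by
  rw [W_succ_s15]
  have h1 := len_phi k (W k m)
  have h2 := cres_le k (k-1) (W k m)
  omega

lemma L_mono (k : ℕ) {i j : ℕ} (h : i ≤ j) : (W k i).length ≤ (W k j).length := by
  induction j with
  | zero => simp_all
  | succ j ih =>
      rcases Nat.eq_or_lt_of_le h with h' | h'
      · rw [h']
      · exact le_trans (ih (by omega)) (L_mono_succ k j)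

lemma L_fib (k : ℕ) (hk : 3 ≤ k) (m : ℕ) :
    (W k m).length + (W k (m+1)).length ≤ (W k (m+2)).length := by
  have h1 := len_phi k (W k (m+1))
  have h2 := len_phi k (W k m)
  have h3 : cres k (k-1) (W k (m+1)) = cres k (k-2) (W k m) := by
    rw [W_succ_s15]; exact cres_top k hk _
  have h4 := cres_pair_le k (k-1) (k-2) (by omega) (W k m)
  rw [show m + 2 = (m+1) + 1 from rfl, W_succ_s15 k (m+1)]
  rw [W_succ_s15 k m] at h1 h3 ⊢
  omega

lemma L_three (k : ℕ) (hk : 3 ≤ k) (m : ℕ) :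
    3 * (W k m).length ≤ (W k (m+3)).length := by
  have h1 := L_fib k hk m
  have h2 := L_fib k hk (m+1)
  have h3 := L_mono_succ k m
  simp only [show m+1+2 = m+3 from rfl, show m+1+1 = m+2 from rfl] at h2
  omega

lemma L_three3 (p : ℕ) : 3 * (W 3 (p+1)).length ≤ (W 3 (p+3)).length := by
  have h1 := len_phi 3 (W 3 (p+2))
  have h2 := len_phi 3 (W 3 (p+1))
  have h3 : cres 3 2 (W 3 (p+2)) = cres 3 1 (W 3 (p+1)) := by
    rw [show p + 2 = (p+1)+1 from rfl, W_succ_s15]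
    exact cres_top 3 (by norm_num) _
  have h4 : cres 3 2 (W 3 (p+1)) = cres 3 1 (W 3 p) := by
    rw [W_succ_s15]; exact cres_top 3 (by norm_num) _
  have h5 : cres 3 0 (W 3 (p+1)) = (W 3 p).length := by
    rw [W_succ_s15]; exact cres_zero 3 (by norm_num) _
  have h6 := cres_le 3 1 (W 3 p)
  have h7 := partition3 (W 3 (p+1))
  have e1 : (3:ℕ) - 1 = 2 := rfl
  rw [e1] at h1 h2
  rw [show phiW 3 (W 3 (p+2)) = W 3 (p+3) from (W_succ_s15 3 (p+2)).symm] at h1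
  rw [show phiW 3 (W 3 (p+1)) = W 3 (p+2) from (W_succ_s15 3 (p+1)).symm] at h2
  omega

theorem three_W_length (k n : ℕ) (hk : 3 ≤ k) (hn : 2 * k - 1 < n) :
    3 * (W k (n - 2 * k + 1)).length ≤ (W k (n - k)).length := by
  set m := n - 2 * k + 1 with hm
  have hmk : n - k = m + (k - 1) := by omega
  rcases Nat.eq_or_lt_of_le hk with h3 | h4
  · -- k = 3
    obtain ⟨p, hp⟩ : ∃ p, m = p + 1 := ⟨n - 2 * k, by omega⟩
    have : n - k = p + 3 := by omega
    rw [this, hp, ← h3]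
    exact L_three3 p
  · -- k ≥ 4
    calc 3 * (W k m).length ≤ (W k (m+3)).length := L_three k hk m
      _ ≤ (W k (n - k)).length := L_mono k (by omega)
end
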